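/- In the coordinate model of canonical vector fields and vertical endomorphisms on T^kQ, the composition satisfies J_r(Δ_s) = 0 if r+s ≥ k+1 and J_r(Δ_s) = Δ_{r+s} if r+s < k+1, where Δ_s is the vector with components Δ_s = Σ_{i=0}^{k−s} ((s+i)!/i!) q_{i+1}^A e_{s+i,A} and J_r acts as J_r(e_{i,A}) = ((r+i)!/i!) e_{r+i,A} for i ≤ k−r, 0 otherwise. -/
import Mathlib


/-- The ring of "functions" of the variables `q_i^A` (`i ∈ ℕ`, `A ∈ Fin n`). -/
abbrev Coeff (n : ℕ) := ((ℕ × Fin n) → ℝ) → ℝ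

/-- The coordinate function `q_i^A` as an element of the coefficient ring. -/
def qv (n : ℕ) (i : ℕ) (A : Fin n) : Coeff n := fun x => x (i, A)

/-- Coordinate model of the `r`-th vertical endomorphism `J_r` on vector fields on `T^k Q`:
`J_r(e_{i,A}) = ((r+i)!/i!) e_{r+i,A}` for `i ≤ k-r`, `0` otherwise, in components. -/
def Jmod (k n r : ℕ) (v : Fin (k+1) → Fin n → Coeff n) : Fin (k+1) → Fin n → Coeff n :=
  fun j A =>
    if r ≤ (j : ℕ) then
      (fun _ => ((Nat.descFactorial (j : ℕ) r : ℕ) : ℝ)) *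
        v ⟨(j : ℕ) - r, by have := j.isLt; omega⟩ A
    else 0

/-- The `s`-th canonical vector field `Δ_s = Σ_{i=0}^{k-s} ((s+i)!/i!) q_{i+1}^A e_{s+i,A}`,
in components. -/
def Delta (k n s : ℕ) : Fin (k+1) → Fin n → Coeff n :=
  fun j A =>
    if s ≤ (j : ℕ) then
      (fun _ => ((Nat.descFactorial (j : ℕ) s : ℕ) : ℝ)) * qv n ((j : ℕ) - s + 1) A
    else 0

/-- `J_r(Δ_s) = 0` if `r + s ≥ k+1`, and `J_r(Δ_s) = Δ_{r+s}` if `r + s < k+1`. -/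
theorem vertical_endomorphism_canonical_field (k n r s : ℕ) (hk : 1 ≤ k) (hn : 1 ≤ n)
    (hr1 : 1 ≤ r) (hrk : r ≤ k) (hs1 : 1 ≤ s) (hsk : s ≤ k) :
    (k + 1 ≤ r + s → Jmod k n r (Delta k n s) = 0) ∧
    (r + s < k + 1 → Jmod k n r (Delta k n s) = Delta k n (r + s)) := by
  have key : ∀ (j : Fin (k+1)), Jmod k n r (Delta k n s) j =
      (fun A => if r + s ≤ (j : ℕ) then
        (fun _ => ((Nat.descFactorial (j : ℕ) (r + s) : ℕ) : ℝ)) *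
          qv n ((j : ℕ) - (r + s) + 1) A else 0) := by
    intro j
    funext A
    simp only [Jmod, Delta]
    by_cases h1 : r ≤ (j : ℕ)
    · by_cases h2 : s ≤ (j : ℕ) - r
      · have h3 : r + s ≤ (j : ℕ) := by omega
        simp only [if_pos h1, if_pos h2, if_pos h3]
        have hd : ((j : ℕ) - r).descFactorial s * (j : ℕ).descFactorial r
            = (j : ℕ).descFactorial (r + s) := by
          have := Nat.descFactorial_mul_descFactorial
            (k := r) (m := r + s) (n := (j : ℕ)) (by omega)
          simpa using this
        have hidx : (j : ℕ) - r - s = (j : ℕ) - (r + s) := by omega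
        funext x
        simp only [Pi.mul_apply, hidx, qv]
        rw [← hd]
        push_cast
        ring
      · have h3 : ¬ r + s ≤ (j : ℕ) := by omega
        simp [if_pos h1, if_neg h2, if_neg h3]
    · have h3 : ¬ r + s ≤ (j : ℕ) := by omega
      simp [if_neg h1, if_neg h3]
  constructor
  · intro hge
    funext j A
    have := congrFun (key j) A
    have hj : ¬ r + s ≤ (j : ℕ) := by have := j.isLt; omega
    simp only [if_neg hj] at this
    simpa using this
  · intro hlt
    funext j A
    have := congrFun (key j) A
    simpa [Delta] using this
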